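/- For every ε ≥ 0 and every function f with f(ℓ) ≥ (1/2 + ε)(ℓ−1) for all ℓ, the variable quasi-Ramsey number satisfies, as k → ∞, R_f(k) ≥ (1+o(1))·(k/e)·exp(((k−1)/2)·Λ*(1/2 − ε)). -/

import Mathlib

open scoped Classical ENNReal

/-- `Λ*(x) = x ln(2x) + (1-x) ln(2(1-x))` with `Real.log 0 = 0` giving `0·ln 0 = 0`. -/
noncomputable def LambdaStar (x : ℝ) : ℝ :=
  x * Real.log (2 * x) + (1 - x) * Real.log (2 * (1 - x))

/-- `S` is a `t`-homogeneous set of `G`: `G[S]` or its complement has min degree `≥ t`. -/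
def IsHomog {n : ℕ} (G : SimpleGraph (Fin n)) (S : Finset (Fin n)) (t : ℝ) : Prop :=
  (∀ v ∈ S, t ≤ ((S.filter (G.Adj v)).card : ℝ)) ∨
  (∀ v ∈ S, t ≤ ((S.filter (Gᶜ.Adj v)).card : ℝ))

/-- The variable quasi-Ramsey number `R_f(k)`, as an extended real so that it is `⊤`
when no `N` works (which corresponds to `Λ* = ∞` outside `[0,1]`). -/
noncomputable def Rvar (f : ℕ → ℝ) (k : ℕ) : ℝ≥0∞ :=
  sInf {n : ℝ≥0∞ | ∃ N : ℕ, n = N ∧ ∀ G : SimpleGraph (Fin N),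
    ∃ S : Finset (Fin N), k ≤ S.card ∧ IsHomog G S (f S.card)}

lemma lambdaStar_nonneg {x : ℝ} (hx0 : 0 ≤ x) (hx1 : x ≤ 1) : 0 ≤ LambdaStar x := by
  have log2 : (0:ℝ) ≤ Real.log 2 := Real.log_nonneg (by norm_num)
  have key : ∀ y : ℝ, 0 < y → 1 - 1/(2*y) ≤ Real.log (2*y) := by
    intro y hy
    have h2y : 0 < 2*y := by linarith
    have := Real.log_le_sub_one_of_pos (x := (2*y)⁻¹) (by positivity)
    rw [Real.log_inv] at this
    have h2 : 1 - (2*y)⁻¹ ≤ Real.log (2*y) := by linarith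
    simpa [one_div] using h2
  rcases eq_or_lt_of_le hx0 with h0 | h0
  · simp [LambdaStar, ← h0]; linarith
  rcases eq_or_lt_of_le hx1 with h1 | h1
  · simp [LambdaStar, h1]; linarith
  have k1 := key x h0
  have k2 := key (1-x) (by linarith)
  have e1 : x * (1 - 1/(2*x)) ≤ x * Real.log (2*x) :=
    mul_le_mul_of_nonneg_left k1 hx0
  have e2 : (1-x) * (1 - 1/(2*(1-x))) ≤ (1-x) * Real.log (2*(1-x)) :=
    mul_le_mul_of_nonneg_left k2 (by linarith)
  have hx : x * (1 - 1/(2*x)) = x - 1/2 := by field_simp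
  have hx' : (1-x) * (1 - 1/(2*(1-x))) = (1-x) - 1/2 := by
    have h : (1:ℝ) - x ≠ 0 := by linarith
    field_simp
  unfold LambdaStar
  rw [hx] at e1; rw [hx'] at e2
  linarith

lemma entropy_count {γ : Type*} [DecidableEq γ] (A : Finset γ) {ε : ℝ} (hε : 0 ≤ ε)
    (hε2 : ε ≤ 1/2) :
    ((A.powerset.filter fun B => (1/2+ε) * (A.card : ℝ) ≤ (B.card : ℝ)).card : ℝ)
      ≤ 2 ^ A.card * Real.exp (-(A.card : ℝ) * LambdaStar (1/2 - ε)) := by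
  set m : ℕ := A.card with hm
  rcases eq_or_lt_of_le hε2 with he | he
  · -- ε = 1/2 : count ≤ 1, RHS = 1
    have hL : LambdaStar (1/2 - ε) = Real.log 2 := by
      rw [← he]; norm_num [LambdaStar]
    have hsub : (A.powerset.filter fun B => (1/2+ε) * (m : ℝ) ≤ (B.card : ℝ)) ⊆ {A} := by
      intro B hB
      rw [Finset.mem_filter, Finset.mem_powerset] at hB
      have h12 : (1/2+ε) * (m:ℝ) = m := by rw [he]; norm_num
      have : (m : ℝ) ≤ (B.card : ℝ) := by rw [← h12]; exact hB.2
      have hc : m ≤ B.card := by exact_mod_cast this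
      simp [Finset.eq_of_subset_of_card_le hB.1 hc]
    have hcard : ((A.powerset.filter fun B => (1/2+ε) * (m : ℝ) ≤ (B.card : ℝ)).card : ℝ) ≤ 1 := by
      exact_mod_cast (Finset.card_le_card hsub).trans (by simp)
    have hone : (2:ℝ) ^ m * Real.exp (-(m:ℝ) * Real.log 2) = 1 := by
      rw [neg_mul, Real.exp_neg, Real.exp_nat_mul, Real.exp_log (by norm_num : (0:ℝ) < 2)]
      field_simp
    rw [hL, hone]; exact hcard
  · -- ε < 1/2
    set α : ℝ := 1/2 + ε with hα
    set x : ℝ := 1/2 - ε with hxd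
    have hx0 : 0 < x := by rw [hxd]; linarith
    have hα0 : 0 < α := by rw [hα]; linarith
    have hαx : x ≤ α := by rw [hα, hxd]; linarith
    have hax : α + x = 1 := by rw [hα, hxd]; ring
    have hsum1 : ∑ B ∈ A.powerset, α ^ B.card * x ^ (m - B.card) = 1 := by
      have hpa := Finset.prod_add (fun _ : γ => α) (fun _ : γ => x) A
      rw [Finset.prod_const, hax, one_pow] at hpa
      rw [hpa]
      symm
      apply Finset.sum_congr rfl
      intro B hB
      rw [Finset.mem_powerset] at hB
      rw [Finset.prod_const, Finset.prod_const, Finset.card_sdiff_of_subset hB]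
    set w : ℝ := Real.exp ((m:ℝ) * (α * Real.log α + x * Real.log x)) with hw
    have hwle : ∀ B ∈ A.powerset.filter fun B => α * (m : ℝ) ≤ (B.card : ℝ),
        w ≤ α ^ B.card * x ^ (m - B.card) := by
      intro B hB
      rw [Finset.mem_filter, Finset.mem_powerset] at hB
      have hBm : B.card ≤ m := Finset.card_le_card hB.1
      have hj : α * (m:ℝ) ≤ (B.card : ℝ) := hB.2
      have hαp : α ^ B.card = Real.exp ((B.card : ℝ) * Real.log α) := by
        rw [Real.exp_nat_mul, Real.exp_log hα0]
      have hxp : x ^ (m - B.card) = Real.exp (((m - B.card : ℕ) : ℝ) * Real.log x) := by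
        rw [Real.exp_nat_mul, Real.exp_log hx0]
      rw [hαp, hxp, ← Real.exp_add, hw]
      apply Real.exp_le_exp.2
      rw [Nat.cast_sub hBm]
      have hlog : Real.log x ≤ Real.log α := Real.log_le_log hx0 hαx
      have hprod : 0 ≤ ((B.card : ℝ) - α * m) * (Real.log α - Real.log x) :=
        mul_nonneg (by linarith) (by linarith)
      have expand : ((B.card:ℝ) * Real.log α + ((m:ℝ) - B.card) * Real.log x)
          - (m:ℝ) * (α * Real.log α + x * Real.log x)
          = ((B.card:ℝ) - α * m) * (Real.log α - Real.log x) := by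
        have hx1 : x = 1 - α := by linarith
        rw [hx1]; ring
      linarith [hprod, expand]
    have hwpos : 0 < w := Real.exp_pos _
    have hcount : ((A.powerset.filter fun B => α * (m : ℝ) ≤ (B.card : ℝ)).card : ℝ) * w ≤ 1 := by
      calc ((A.powerset.filter fun B => α * (m : ℝ) ≤ (B.card : ℝ)).card : ℝ) * w
          ≤ ∑ B ∈ A.powerset.filter fun B => α * (m : ℝ) ≤ (B.card : ℝ),
              α ^ B.card * x ^ (m - B.card) := by
            rw [← nsmul_eq_mul]
            exact Finset.card_nsmul_le_sum _ _ _ hwle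
        _ ≤ ∑ B ∈ A.powerset, α ^ B.card * x ^ (m - B.card) := by
            apply Finset.sum_le_sum_of_subset_of_nonneg (Finset.filter_subset _ _)
            intro B _ _; positivity
        _ = 1 := hsum1
    have hRHS : (2:ℝ) ^ m * Real.exp (-(m:ℝ) * LambdaStar x) = w⁻¹ := by
      have hΛ : LambdaStar x = Real.log 2 + (α * Real.log α + x * Real.log x) := by
        unfold LambdaStar
        have h1 : Real.log (2 * x) = Real.log 2 + Real.log x := Real.log_mul (by norm_num) hx0.ne'
        have h3 : (1 : ℝ) - x = α := by linarith
        have h2 : Real.log (2 * (1 - x)) = Real.log 2 + Real.log (1 - x) := by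
          rw [h3]; exact Real.log_mul (by norm_num) hα0.ne'
        rw [h1, h2, h3]
        ring
      rw [hΛ, hw, ← Real.exp_neg,
        show (2:ℝ)^m = Real.exp ((m:ℝ) * Real.log 2) by
          rw [Real.exp_nat_mul, Real.exp_log]; norm_num,
        ← Real.exp_add]
      ring_nf
    rw [hRHS]
    have hc' : ((A.powerset.filter fun B => α * (m : ℝ) ≤ (B.card : ℝ)).card : ℝ) ≤ w⁻¹ := by
      rw [← one_div]
      exact (le_div_iff₀ hwpos).2 hcount
    exact hc'


section Comb
variable {V : Type*} [DecidableEq V]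

lemma card_two_mul_image (T : Finset (V × V))
    (hne : ∀ p ∈ T, p.1 ≠ p.2) (hsw : ∀ p ∈ T, p.swap ∈ T) :
    T.card = 2 * (T.image (fun p => s(p.1, p.2))).card := by
  rw [Finset.card_eq_sum_card_image (fun p => s(p.1, p.2)) T]
  rw [Finset.sum_congr rfl (fun e he => ?_), Finset.sum_const, smul_eq_mul, mul_comm]
  obtain ⟨p, hp, hpe⟩ := Finset.mem_image.1 he
  have hfil : T.filter (fun q => s(q.1, q.2) = e) = {p, p.swap} := by
    ext q
    rw [Finset.mem_filter, Finset.mem_insert, Finset.mem_singleton]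
    constructor
    · rintro ⟨hq, hqe⟩
      rw [← hpe, Sym2.eq_iff] at hqe
      rcases hqe with ⟨h1, h2⟩ | ⟨h1, h2⟩
      · left; exact Prod.ext h1 h2
      · right; exact Prod.ext h1 h2
    · rintro (rfl | rfl)
      · exact ⟨hp, hpe⟩
      · refine ⟨hsw p hp, ?_⟩
        rw [← hpe]
        exact Sym2.eq_swap
  rw [hfil, Finset.card_insert_of_notMem, Finset.card_singleton]
  rw [Finset.mem_singleton]
  intro h
  rw [Prod.ext_iff] at h
  exact hne p hp h.1

lemma card_two_mul_image' (T : Finset (V × V))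
    (hne : ∀ p ∈ T, p.1 ≠ p.2) (hsw : ∀ p ∈ T, p.swap ∈ T) :
    T.card = 2 * (T.image (fun p => s(p.1, p.2))).card :=
  card_two_mul_image T hne hsw

/-- handshake: sum of degrees equals twice the number of (good) unordered pairs -/
lemma handshake (S : Finset V) (p : Sym2 V → Prop) [DecidablePred p] :
    ∑ v ∈ S, (S.filter (fun u => v ≠ u ∧ p s(v, u))).card
      = 2 * (((S.offDiag.image (fun q => s(q.1, q.2))).filter p).card) := by
  set T : Finset (V × V) := S.offDiag.filter (fun q => p s(q.1, q.2)) with hT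
  have hTsub : ∀ q ∈ T, q.1 ∈ S ∧ q.2 ∈ S ∧ q.1 ≠ q.2 := by
    intro q hq
    rw [hT, Finset.mem_filter, Finset.mem_offDiag] at hq
    exact hq.1
  have step1 : T.card = ∑ v ∈ S, (S.filter (fun u => v ≠ u ∧ p s(v, u))).card := by
    rw [Finset.card_eq_sum_card_fiberwise (f := Prod.fst) (t := S)
      (fun q hq => (hTsub q hq).1)]
    apply Finset.sum_congr rfl
    intro v hv
    apply Finset.card_bij (fun q _ => q.2)
    · intro q hq
      rw [Finset.mem_filter] at hq
      obtain ⟨hq1, hq2⟩ := hq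
      have h := hTsub q hq1
      rw [hT, Finset.mem_filter] at hq1
      rw [Finset.mem_filter]
      subst hq2
      exact ⟨h.2.1, h.2.2, hq1.2⟩
    · intro a ha b hb hab
      rw [Finset.mem_filter] at ha hb
      ext
      · rw [ha.2, hb.2]
      · exact hab
    · intro u hu
      rw [Finset.mem_filter] at hu
      refine ⟨(v, u), ?_, rfl⟩
      rw [Finset.mem_filter, hT, Finset.mem_filter, Finset.mem_offDiag]
      exact ⟨⟨⟨hv, hu.1, hu.2.1⟩, hu.2.2⟩, rfl⟩
  have step2 : T.card = 2 * ((T.image (fun q => s(q.1, q.2))).card) := by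
    apply card_two_mul_image
    · intro q hq; exact (hTsub q hq).2.2
    · intro q hq
      rw [hT, Finset.mem_filter, Finset.mem_offDiag] at hq ⊢
      refine ⟨⟨hq.1.2.1, hq.1.1, (hq.1.2.2).symm⟩, ?_⟩
      have : s(q.2, q.1) = s(q.1, q.2) := Sym2.eq_swap
      rw [Prod.fst_swap, Prod.snd_swap, this]
      exact hq.2
  have step3 : T.image (fun q => s(q.1, q.2)) = (S.offDiag.image (fun q => s(q.1, q.2))).filter p := by
    rw [hT, Finset.filter_image]
  rw [← step1, step2, step3]

lemma card_offDiag_image (S : Finset V) :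
    2 * ((S.offDiag.image (fun q => s(q.1, q.2))).card) = S.card * S.card - S.card := by
  rw [← Finset.offDiag_card]
  symm
  apply card_two_mul_image
  · intro q hq; exact (Finset.mem_offDiag.1 hq).2.2
  · intro q hq
    rw [Finset.mem_offDiag] at hq ⊢
    exact ⟨hq.2.1, hq.1, hq.2.2.symm⟩

end Comb


lemma card_fiber_le {γ : Type*} [Fintype γ] [DecidableEq γ] (A B : Finset γ) (b : Bool) :
    ((Finset.univ.filter (fun ω : γ → Bool => A.filter (fun e => ω e = b) = B)).card)
      ≤ 2 ^ (Fintype.card γ - A.card) := by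
  have htarget : ((Finset.univ : Finset ({e : γ // e ∉ A} → Bool)).card)
      = 2 ^ (Fintype.card γ - A.card) := by
    rw [Finset.card_univ, Fintype.card_fun, Fintype.card_subtype]
    have h1 : Finset.univ.filter (fun e : γ => e ∉ A) = Finset.univ \ A := by
      ext e; simp
    rw [h1, Finset.card_sdiff_of_subset (Finset.subset_univ A), Finset.card_univ, Fintype.card_bool]
  rw [← htarget]
  apply Finset.card_le_card_of_injOn (fun ω => (fun e : {e : γ // e ∉ A} => ω e.1))
    (fun ω _ => Finset.mem_univ _)
  intro ω₁ h₁ ω₂ h₂ hres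
  simp only [Finset.coe_filter, Set.mem_setOf_eq] at h₁ h₂
  funext e
  by_cases he : e ∈ A
  · have h1 : ω₁ e = b ↔ e ∈ B := by
      rw [← h₁.2]; simp [Finset.mem_filter, he]
    have h2 : ω₂ e = b ↔ e ∈ B := by
      rw [← h₂.2]; simp [Finset.mem_filter, he]
    have h3 : ω₁ e = b ↔ ω₂ e = b := h1.trans h2.symm
    revert h3
    cases hb : b <;> cases h1' : ω₁ e <;> cases h2' : ω₂ e <;> simp
  · exact congrFun hres ⟨e, he⟩

lemma badS_bound {N : ℕ} (ε : ℝ) (hε : 0 ≤ ε) (hε2 : ε ≤ 1/2) (S : Finset (Fin N)) (t : ℝ)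
    (ht : (1/2+ε) * ((S.card:ℝ) - 1) ≤ t) (b : Bool) :
    ((Finset.univ.filter (fun ω : Sym2 (Fin N) → Bool =>
        ∀ v ∈ S, t ≤ ((S.filter (fun u => v ≠ u ∧ ω s(v, u) = b)).card : ℝ))).card : ℝ)
      ≤ 2 ^ (Fintype.card (Sym2 (Fin N))) *
          Real.exp (-((S.card:ℝ) * ((S.card:ℝ) - 1) / 2) * LambdaStar (1/2 - ε)) := by
  set A : Finset (Sym2 (Fin N)) := S.offDiag.image (fun q => s(q.1, q.2)) with hA
  set m : ℕ := A.card with hm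
  set M : ℕ := Fintype.card (Sym2 (Fin N)) with hM
  have hmM : m ≤ M := by
    rw [hm, hM, ← Finset.card_univ]
    exact Finset.card_le_univ A
  have h2m : 2 * m = S.card * S.card - S.card := card_offDiag_image S
  have hcard_sq : S.card ≤ S.card * S.card := by
    rcases Nat.eq_zero_or_pos S.card with h | h
    · simp [h]
    · calc S.card = S.card * 1 := (mul_one _).symm
        _ ≤ S.card * S.card := Nat.mul_le_mul_left _ h
  have hmR : (m : ℝ) = (S.card:ℝ) * ((S.card:ℝ) - 1) / 2 := by
    have := congrArg (fun n : ℕ => (n : ℝ)) h2m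
    simp only [Nat.cast_mul, Nat.cast_ofNat, Nat.cast_sub hcard_sq] at this
    push_cast at this
    linarith
  have hsub : (Finset.univ.filter (fun ω : Sym2 (Fin N) → Bool =>
        ∀ v ∈ S, t ≤ ((S.filter (fun u => v ≠ u ∧ ω s(v, u) = b)).card : ℝ)))
      ⊆ (A.powerset.filter (fun B => (1/2+ε) * (m:ℝ) ≤ (B.card:ℝ))).biUnion
        (fun B => Finset.univ.filter (fun ω => A.filter (fun e => ω e = b) = B)) := by
    intro ω hω
    rw [Finset.mem_filter] at hω
    have hbad := hω.2
    rw [Finset.mem_biUnion]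
    refine ⟨A.filter (fun e => ω e = b), ?_, ?_⟩
    · rw [Finset.mem_filter, Finset.mem_powerset]
      refine ⟨Finset.filter_subset _ _, ?_⟩
      have hhs := handshake S (fun e => ω e = b)
      -- real-cast sum bound
      have hsum : (S.card : ℝ) * t ≤
          ((∑ v ∈ S, (S.filter (fun u => v ≠ u ∧ ω s(v, u) = b)).card : ℕ) : ℝ) := by
        push_cast
        rw [← nsmul_eq_mul]
        exact Finset.card_nsmul_le_sum _ _ _ (fun v hv => hbad v hv)
      rw [hhs] at hsum
      push_cast at hsum
      have hℓ : (0:ℝ) ≤ (S.card : ℝ) := Nat.cast_nonneg _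
      have h1 : (S.card : ℝ) * ((1/2+ε) * ((S.card:ℝ) - 1)) ≤ (S.card : ℝ) * t :=
        mul_le_mul_of_nonneg_left ht hℓ
      rw [hmR]
      nlinarith [h1, hsum]
    · rw [Finset.mem_filter]
      exact ⟨Finset.mem_univ _, rfl⟩
  have hcount := Finset.card_le_card hsub
  have hbind := Finset.card_biUnion_le (s := A.powerset.filter (fun B => (1/2+ε) * (m:ℝ) ≤ (B.card:ℝ)))
    (t := fun B => Finset.univ.filter (fun ω : Sym2 (Fin N) → Bool => A.filter (fun e => ω e = b) = B))
  have hper : ∀ B ∈ A.powerset.filter (fun B => (1/2+ε) * (m:ℝ) ≤ (B.card:ℝ)),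
      (Finset.univ.filter (fun ω : Sym2 (Fin N) → Bool => A.filter (fun e => ω e = b) = B)).card
        ≤ 2 ^ (M - m) := fun B _ => card_fiber_le A B b
  have htotal : (Finset.univ.filter (fun ω : Sym2 (Fin N) → Bool =>
        ∀ v ∈ S, t ≤ ((S.filter (fun u => v ≠ u ∧ ω s(v, u) = b)).card : ℝ))).card
      ≤ (A.powerset.filter (fun B => (1/2+ε) * (m:ℝ) ≤ (B.card:ℝ))).card * 2 ^ (M - m) := by
    calc _ ≤ _ := hcount
      _ ≤ _ := hbind
      _ ≤ ∑ _B ∈ A.powerset.filter (fun B => (1/2+ε) * (m:ℝ) ≤ (B.card:ℝ)), 2 ^ (M - m) :=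
          Finset.sum_le_sum hper
      _ = _ := by rw [Finset.sum_const, smul_eq_mul]
  have hent := entropy_count A hε hε2
  rw [← hm] at hent
  have hfinal : ((Finset.univ.filter (fun ω : Sym2 (Fin N) → Bool =>
        ∀ v ∈ S, t ≤ ((S.filter (fun u => v ≠ u ∧ ω s(v, u) = b)).card : ℝ))).card : ℝ)
      ≤ (2 ^ m * Real.exp (-(m : ℝ) * LambdaStar (1/2 - ε))) * 2 ^ (M - m) := by
    calc ((Finset.univ.filter _).card : ℝ)
        ≤ ((A.powerset.filter (fun B => (1/2+ε) * (m:ℝ) ≤ (B.card:ℝ))).card : ℝ) * 2 ^ (M - m) := by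
          exact_mod_cast htotal
      _ ≤ (2 ^ m * Real.exp (-(m : ℝ) * LambdaStar (1/2 - ε))) * 2 ^ (M - m) := by
          apply mul_le_mul_of_nonneg_right hent
          positivity
  calc ((Finset.univ.filter _).card : ℝ) ≤ _ := hfinal
    _ = 2 ^ M * Real.exp (-((S.card:ℝ) * ((S.card:ℝ) - 1) / 2) * LambdaStar (1/2 - ε)) := by
        rw [← hmR]
        rw [show (2:ℝ) ^ m * Real.exp (-(m : ℝ) * LambdaStar (1/2 - ε)) * 2 ^ (M - m)
            = ((2:ℝ) ^ m * 2 ^ (M - m)) * Real.exp (-(m : ℝ) * LambdaStar (1/2 - ε)) by ring]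
        rw [← pow_add, Nat.add_sub_cancel' hmM]

def Gr {N : ℕ} (ω : Sym2 (Fin N) → Bool) : SimpleGraph (Fin N) where
  Adj a b := a ≠ b ∧ ω s(a, b) = true
  symm := by
    constructor
    rintro a b ⟨h1, h2⟩
    exact ⟨h1.symm, by rwa [Sym2.eq_swap]⟩
  loopless := by constructor; rintro a ⟨h, _⟩; exact h rfl

lemma homogS_bound {N : ℕ} (ε : ℝ) (hε : 0 ≤ ε) (hε2 : ε ≤ 1/2) (S : Finset (Fin N)) (t : ℝ)
    (ht : (1/2+ε) * ((S.card:ℝ) - 1) ≤ t) :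
    ((Finset.univ.filter (fun ω : Sym2 (Fin N) → Bool => IsHomog (Gr ω) S t)).card : ℝ)
      ≤ 2 * (2 ^ (Fintype.card (Sym2 (Fin N))) *
          Real.exp (-((S.card:ℝ) * ((S.card:ℝ) - 1) / 2) * LambdaStar (1/2 - ε))) := by
  have hsub : (Finset.univ.filter (fun ω : Sym2 (Fin N) → Bool => IsHomog (Gr ω) S t))
      ⊆ (Finset.univ.filter (fun ω : Sym2 (Fin N) → Bool =>
          ∀ v ∈ S, t ≤ ((S.filter (fun u => v ≠ u ∧ ω s(v, u) = true)).card : ℝ)))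
        ∪ (Finset.univ.filter (fun ω : Sym2 (Fin N) → Bool =>
          ∀ v ∈ S, t ≤ ((S.filter (fun u => v ≠ u ∧ ω s(v, u) = false)).card : ℝ))) := by
    intro ω hω
    rw [Finset.mem_filter] at hω
    rw [Finset.mem_union, Finset.mem_filter, Finset.mem_filter]
    rcases hω.2 with h | h
    · left
      refine ⟨Finset.mem_univ _, fun v hv => ?_⟩
      have heq : S.filter ((Gr ω).Adj v) = S.filter (fun u => v ≠ u ∧ ω s(v, u) = true) :=
        Finset.filter_congr (fun u _ => Iff.rfl)
      rw [← heq]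
      exact h v hv
    · right
      refine ⟨Finset.mem_univ _, fun v hv => ?_⟩
      have heq : S.filter ((Gr ω)ᶜ.Adj v) = S.filter (fun u => v ≠ u ∧ ω s(v, u) = false) := by
        apply Finset.filter_congr
        intro u _
        rw [SimpleGraph.compl_adj]
        constructor
        · rintro ⟨h1, h2⟩
          refine ⟨h1, ?_⟩
          cases hb : ω s(v, u)
          · rfl
          · exact absurd ⟨h1, hb⟩ h2
        · rintro ⟨h1, h2⟩
          refine ⟨h1, fun hadj => ?_⟩
          obtain ⟨-, h3⟩ : v ≠ u ∧ ω s(v, u) = true := hadj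
          rw [h2] at h3
          exact Bool.false_ne_true h3
      rw [← heq]
      exact h v hv
  calc ((Finset.univ.filter (fun ω : Sym2 (Fin N) → Bool => IsHomog (Gr ω) S t)).card : ℝ)
      ≤ (((Finset.univ.filter (fun ω : Sym2 (Fin N) → Bool =>
            ∀ v ∈ S, t ≤ ((S.filter (fun u => v ≠ u ∧ ω s(v, u) = true)).card : ℝ)))
          ∪ (Finset.univ.filter (fun ω : Sym2 (Fin N) → Bool =>
            ∀ v ∈ S, t ≤ ((S.filter (fun u => v ≠ u ∧ ω s(v, u) = false)).card : ℝ)))).card : ℝ) := by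
        exact_mod_cast Finset.card_le_card hsub
    _ ≤ ((Finset.univ.filter (fun ω : Sym2 (Fin N) → Bool =>
            ∀ v ∈ S, t ≤ ((S.filter (fun u => v ≠ u ∧ ω s(v, u) = true)).card : ℝ))).card : ℝ)
        + ((Finset.univ.filter (fun ω : Sym2 (Fin N) → Bool =>
            ∀ v ∈ S, t ≤ ((S.filter (fun u => v ≠ u ∧ ω s(v, u) = false)).card : ℝ))).card : ℝ) := by
        exact_mod_cast Finset.card_union_le _ _
    _ ≤ 2 * (2 ^ (Fintype.card (Sym2 (Fin N))) *
          Real.exp (-((S.card:ℝ) * ((S.card:ℝ) - 1) / 2) * LambdaStar (1/2 - ε))) := by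
        have h1 := badS_bound ε hε hε2 S t ht true
        have h2 := badS_bound ε hε hε2 S t ht false
        linarith

lemma analytic (δ lam : ℝ) (hlam : 0 ≤ lam) (hδ : 0 < δ) (hδ1 : δ < 1) (k N : ℕ)
    (hk1 : 1 ≤ k) (hk2 : 2 * (1-δ)^k < δ)
    (hN : (N:ℝ) < (1-δ) * ((k:ℝ)/Real.exp 1) * Real.exp (((k:ℝ)-1)/2 * lam)) :
    ∑ ℓ ∈ Finset.Icc k N, (N.choose ℓ : ℝ) * (2 * Real.exp (-((ℓ:ℝ)*((ℓ:ℝ)-1)/2) * lam)) < 1 := by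
  set r : ℝ := 1 - δ with hr
  have hr0 : 0 < r := by rw [hr]; linarith
  have hr1 : r < 1 := by rw [hr]; linarith
  set E : ℝ := Real.exp (((k:ℝ)-1)/2 * lam) with hE
  have hterm : ∀ ℓ ∈ Finset.Icc k N,
      (N.choose ℓ : ℝ) * (2 * Real.exp (-((ℓ:ℝ)*((ℓ:ℝ)-1)/2) * lam)) ≤ 2 * r ^ ℓ := by
    intro ℓ hℓ
    rw [Finset.mem_Icc] at hℓ
    have hℓ1 : 1 ≤ ℓ := le_trans hk1 hℓ.1
    have hℓpos : (0:ℝ) < (ℓ:ℝ) := by exact_mod_cast hℓ1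
    have hkpos : (0:ℝ) < (k:ℝ) := by exact_mod_cast hk1
    -- choose bound
    have hch : (N.choose ℓ : ℝ) ≤ (N:ℝ) ^ ℓ / (Nat.factorial ℓ : ℝ) := Nat.choose_le_pow_div ℓ N
    have hfact : ((ℓ:ℝ)) ^ ℓ / (Nat.factorial ℓ : ℝ) ≤ Real.exp (ℓ:ℝ) := by
      have hmem : ℓ ∈ Finset.range (ℓ+1) := Finset.self_mem_range_succ ℓ
      have hsingle : ((ℓ:ℝ)) ^ ℓ / (Nat.factorial ℓ : ℝ)
          ≤ ∑ i ∈ Finset.range (ℓ+1), (ℓ:ℝ) ^ i / (Nat.factorial i : ℝ) := by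
        apply Finset.single_le_sum (f := fun i => (ℓ:ℝ) ^ i / (Nat.factorial i : ℝ)) _ hmem
        intro i _
        positivity
      exact hsingle.trans (Real.sum_le_exp_of_nonneg hℓpos.le _)
    have hfl : (0:ℝ) < (Nat.factorial ℓ : ℝ) := by exact_mod_cast Nat.factorial_pos ℓ
    have hNl : (0:ℝ) ≤ (N:ℝ) := Nat.cast_nonneg N
    -- (N.choose ℓ) ≤ (e*N/ℓ)^ℓ
    have hinv : 1 / (Nat.factorial ℓ : ℝ) ≤ Real.exp (ℓ:ℝ) / (ℓ:ℝ) ^ ℓ := by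
      rw [div_le_div_iff₀ hfl (by positivity), one_mul]
      calc ((ℓ:ℝ)) ^ ℓ = ((ℓ:ℝ)) ^ ℓ / (Nat.factorial ℓ : ℝ) * (Nat.factorial ℓ : ℝ) := by
            field_simp
        _ ≤ Real.exp (ℓ:ℝ) * (Nat.factorial ℓ : ℝ) := by
            apply mul_le_mul_of_nonneg_right hfact hfl.le
    have hch2 : (N.choose ℓ : ℝ) ≤ (Real.exp 1 * (N:ℝ) / (ℓ:ℝ)) ^ ℓ := by
      calc (N.choose ℓ : ℝ) ≤ (N:ℝ) ^ ℓ / (Nat.factorial ℓ : ℝ) := hch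
        _ = (N:ℝ) ^ ℓ * (1 / (Nat.factorial ℓ : ℝ)) := by ring
        _ ≤ (N:ℝ) ^ ℓ * (Real.exp (ℓ:ℝ) / (ℓ:ℝ) ^ ℓ) := by
            apply mul_le_mul_of_nonneg_left hinv (by positivity)
        _ = (Real.exp 1 * (N:ℝ) / (ℓ:ℝ)) ^ ℓ := by
            rw [div_pow, mul_pow, ← Real.exp_nat_mul]
            ring_nf
    -- base bound
    have hbase : Real.exp 1 * (N:ℝ) / (ℓ:ℝ) ≤ r * E := by
      have h1 : Real.exp 1 * (N:ℝ) / (ℓ:ℝ) ≤ Real.exp 1 * (N:ℝ) / (k:ℝ) := by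
        apply div_le_div_of_nonneg_left (by positivity) hkpos
        exact_mod_cast hℓ.1
      have h2 : Real.exp 1 * (N:ℝ) / (k:ℝ) ≤ r * E := by
        rw [div_le_iff₀ hkpos]
        have := hN.le
        calc Real.exp 1 * (N:ℝ) ≤ Real.exp 1 * (r * ((k:ℝ)/Real.exp 1) * E) := by
              apply mul_le_mul_of_nonneg_left _ (Real.exp_pos 1).le
              rw [hr, hE]; exact this
          _ = r * E * (k:ℝ) := by field_simp
      exact h1.trans h2
    have hbase0 : (0:ℝ) ≤ Real.exp 1 * (N:ℝ) / (ℓ:ℝ) := by positivity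
    have hpow : (Real.exp 1 * (N:ℝ) / (ℓ:ℝ)) ^ ℓ ≤ (r * E) ^ ℓ :=
      pow_le_pow_left₀ hbase0 hbase ℓ
    have hEpow : E ^ ℓ * Real.exp (-((ℓ:ℝ)*((ℓ:ℝ)-1)/2) * lam) ≤ 1 := by
      rw [hE, ← Real.exp_nat_mul, ← Real.exp_add]
      have : (ℓ:ℝ) * (((k:ℝ)-1)/2 * lam) + -((ℓ:ℝ)*((ℓ:ℝ)-1)/2) * lam ≤ 0 := by
        have hkl : (k:ℝ) ≤ (ℓ:ℝ) := by exact_mod_cast hℓ.1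
        nlinarith [mul_nonneg (mul_nonneg hlam hℓpos.le) (sub_nonneg.2 hkl)]
      calc Real.exp ((ℓ:ℝ) * (((k:ℝ)-1)/2 * lam) + -((ℓ:ℝ)*((ℓ:ℝ)-1)/2) * lam)
          ≤ Real.exp 0 := Real.exp_le_exp.2 this
        _ = 1 := Real.exp_zero
    calc (N.choose ℓ : ℝ) * (2 * Real.exp (-((ℓ:ℝ)*((ℓ:ℝ)-1)/2) * lam))
        ≤ (r * E) ^ ℓ * (2 * Real.exp (-((ℓ:ℝ)*((ℓ:ℝ)-1)/2) * lam)) := by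
          apply mul_le_mul_of_nonneg_right (hch2.trans hpow) (by positivity)
      _ = 2 * r ^ ℓ * (E ^ ℓ * Real.exp (-((ℓ:ℝ)*((ℓ:ℝ)-1)/2) * lam)) := by
          rw [mul_pow]; ring
      _ ≤ 2 * r ^ ℓ * 1 := by
          apply mul_le_mul_of_nonneg_left hEpow (by positivity)
      _ = 2 * r ^ ℓ := mul_one _
  have hgeom : ∑ ℓ ∈ Finset.Icc k N, (2:ℝ) * r ^ ℓ < 1 := by
    have hsum : ∑ ℓ ∈ Finset.Icc k N, (2:ℝ) * r ^ ℓ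
        = 2 * r ^ k * ∑ i ∈ Finset.range (N + 1 - k), r ^ i := by
      rw [← Finset.Ico_add_one_right_eq_Icc, Finset.sum_Ico_eq_sum_range]
      rw [Finset.mul_sum]
      apply Finset.sum_congr rfl
      intro i _
      rw [pow_add]; ring
    have hgs : ∑ i ∈ Finset.range (N + 1 - k), r ^ i ≤ 1 / δ := by
      rw [geom_sum_eq (by linarith : r ≠ 1)]
      have hd : r - 1 = -δ := by rw [hr]; ring
      have heq : (r ^ (N + 1 - k) - 1) / (r - 1) = (1 - r ^ (N + 1 - k)) / δ := by
        rw [hd, div_neg]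
        rw [show -((r ^ (N + 1 - k) - 1) / δ) = (1 - r ^ (N + 1 - k)) / δ by ring]
      rw [heq]
      have hle : (1:ℝ) - r ^ (N + 1 - k) ≤ 1 := by
        have : (0:ℝ) ≤ r ^ (N + 1 - k) := by positivity
        linarith
      gcongr
    rw [hsum]
    calc 2 * r ^ k * ∑ i ∈ Finset.range (N + 1 - k), r ^ i
        ≤ 2 * r ^ k * (1 / δ) := by
          apply mul_le_mul_of_nonneg_left hgs (by positivity)
      _ < 1 := by
          rw [mul_one_div, div_lt_one hδ]
          linarith
  calc ∑ ℓ ∈ Finset.Icc k N, (N.choose ℓ : ℝ) * (2 * Real.exp (-((ℓ:ℝ)*((ℓ:ℝ)-1)/2) * lam))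
      ≤ ∑ ℓ ∈ Finset.Icc k N, (2:ℝ) * r ^ ℓ := Finset.sum_le_sum hterm
    _ < 1 := hgeom

lemma exists_good {N : ℕ} (ε δ : ℝ) (hε : 0 ≤ ε) (hε2 : ε ≤ 1/2) (hδ : 0 < δ) (hδ1 : δ < 1)
    (f : ℕ → ℝ) (hf : ∀ ℓ : ℕ, (1/2 + ε) * ((ℓ:ℝ) - 1) ≤ f ℓ) (k : ℕ)
    (hk1 : 1 ≤ k) (hk2 : 2 * (1-δ)^k < δ)
    (hN : (N:ℝ) < (1-δ) * ((k:ℝ)/Real.exp 1) * Real.exp (((k:ℝ)-1)/2 * LambdaStar (1/2-ε))) :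
    ∃ G : SimpleGraph (Fin N), ¬ ∃ S : Finset (Fin N), k ≤ S.card ∧ IsHomog G S (f S.card) := by
  set lam : ℝ := LambdaStar (1/2-ε) with hlamd
  have hlam : 0 ≤ lam := lambdaStar_nonneg (by linarith) (by linarith)
  set M : ℕ := Fintype.card (Sym2 (Fin N)) with hM
  set Bad : Finset (Sym2 (Fin N) → Bool) := Finset.univ.filter
    (fun ω : Sym2 (Fin N) → Bool =>
      ∃ S : Finset (Fin N), k ≤ S.card ∧ IsHomog (Gr ω) S (f S.card)) with hBad
  have hsub : Bad ⊆ (Finset.Icc k N).biUnion (fun ℓ =>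
      (Finset.univ.powersetCard ℓ).biUnion (fun S =>
        Finset.univ.filter (fun ω => IsHomog (Gr ω) S (f S.card)))) := by
    intro ω hω
    rw [hBad, Finset.mem_filter] at hω
    obtain ⟨-, S, hS1, hS2⟩ := hω
    rw [Finset.mem_biUnion]
    refine ⟨S.card, ?_, ?_⟩
    · rw [Finset.mem_Icc]
      refine ⟨hS1, ?_⟩
      have := Finset.card_le_univ S
      simpa using this
    · rw [Finset.mem_biUnion]
      exact ⟨S, Finset.mem_powersetCard_univ.2 rfl,
        Finset.mem_filter.2 ⟨Finset.mem_univ _, hS2⟩⟩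
  have key : ∀ ℓ ∈ Finset.Icc k N, ∀ S ∈ (Finset.univ : Finset (Fin N)).powersetCard ℓ,
      ((Finset.univ.filter (fun ω : Sym2 (Fin N) → Bool =>
          IsHomog (Gr ω) S (f S.card))).card : ℝ)
        ≤ (2:ℝ) ^ M * (2 * Real.exp (-((ℓ:ℝ)*((ℓ:ℝ)-1)/2) * lam)) := by
    intro ℓ hℓ S hS
    have hSc : S.card = ℓ := Finset.mem_powersetCard_univ.1 hS
    subst hSc
    have hb := homogS_bound ε hε hε2 S (f S.card) (hf S.card)
    rw [hlamd]
    calc _ ≤ _ := hb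
      _ = (2:ℝ) ^ M * (2 * Real.exp (-((S.card:ℝ)*((S.card:ℝ)-1)/2) * LambdaStar (1/2-ε))) := by
        rw [hM]; ring
  have hcard : ((Bad.card : ℝ)) < (2:ℝ) ^ M := by
    have h1 : Bad.card ≤ ∑ ℓ ∈ Finset.Icc k N, ∑ S ∈ (Finset.univ : Finset (Fin N)).powersetCard ℓ,
        (Finset.univ.filter (fun ω : Sym2 (Fin N) → Bool =>
          IsHomog (Gr ω) S (f S.card))).card :=
      (Finset.card_le_card hsub).trans (Finset.card_biUnion_le.trans
        (Finset.sum_le_sum (fun ℓ _ => Finset.card_biUnion_le)))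
    have h2 : ((Bad.card : ℝ)) ≤ ∑ ℓ ∈ Finset.Icc k N,
        ∑ S ∈ (Finset.univ : Finset (Fin N)).powersetCard ℓ,
        ((Finset.univ.filter (fun ω : Sym2 (Fin N) → Bool =>
          IsHomog (Gr ω) S (f S.card))).card : ℝ) := by
      exact_mod_cast h1
    have h3 : ((Bad.card : ℝ)) ≤ ∑ ℓ ∈ Finset.Icc k N,
        (N.choose ℓ : ℝ) * ((2:ℝ) ^ M * (2 * Real.exp (-((ℓ:ℝ)*((ℓ:ℝ)-1)/2) * lam))) := by
      refine h2.trans (Finset.sum_le_sum (fun ℓ hℓ => ?_))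
      calc ∑ S ∈ (Finset.univ : Finset (Fin N)).powersetCard ℓ,
            ((Finset.univ.filter (fun ω : Sym2 (Fin N) → Bool =>
              IsHomog (Gr ω) S (f S.card))).card : ℝ)
          ≤ ∑ _S ∈ (Finset.univ : Finset (Fin N)).powersetCard ℓ,
            (2:ℝ) ^ M * (2 * Real.exp (-((ℓ:ℝ)*((ℓ:ℝ)-1)/2) * lam)) :=
            Finset.sum_le_sum (key ℓ hℓ)
        _ = (N.choose ℓ : ℝ) * ((2:ℝ) ^ M * (2 * Real.exp (-((ℓ:ℝ)*((ℓ:ℝ)-1)/2) * lam))) := by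
            rw [Finset.sum_const, Finset.card_powersetCard, Finset.card_univ, Fintype.card_fin,
              nsmul_eq_mul]
    have h4 : ∑ ℓ ∈ Finset.Icc k N,
        (N.choose ℓ : ℝ) * ((2:ℝ) ^ M * (2 * Real.exp (-((ℓ:ℝ)*((ℓ:ℝ)-1)/2) * lam)))
        = (2:ℝ) ^ M * ∑ ℓ ∈ Finset.Icc k N,
            (N.choose ℓ : ℝ) * (2 * Real.exp (-((ℓ:ℝ)*((ℓ:ℝ)-1)/2) * lam)) := by
      rw [Finset.mul_sum]
      exact Finset.sum_congr rfl (fun ℓ _ => by ring)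
    have h5 := analytic δ lam hlam hδ hδ1 k N hk1 hk2 hN
    have h6 : (2:ℝ) ^ M * ∑ ℓ ∈ Finset.Icc k N,
        (N.choose ℓ : ℝ) * (2 * Real.exp (-((ℓ:ℝ)*((ℓ:ℝ)-1)/2) * lam)) < (2:ℝ) ^ M * 1 := by
      apply mul_lt_mul_of_pos_left h5 (by positivity)
    rw [mul_one] at h6
    calc ((Bad.card : ℝ)) ≤ _ := h3
      _ = _ := h4
      _ < _ := h6
  have hlt : Bad.card < Fintype.card (Sym2 (Fin N) → Bool) := by
    have hcf : ((Fintype.card (Sym2 (Fin N) → Bool) : ℕ) : ℝ) = (2:ℝ) ^ M := by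
      rw [Fintype.card_fun, Fintype.card_bool, hM]
      push_cast
      ring
    have := hcard.trans_le hcf.symm.le
    exact_mod_cast this
  obtain ⟨ω, hω⟩ : ∃ ω, ω ∉ Bad := by
    by_contra h
    push_neg at h
    have heq : Bad = Finset.univ := Finset.eq_univ_iff_forall.2 h
    rw [heq, Finset.card_univ] at hlt
    exact lt_irrefl _ hlt
  refine ⟨Gr ω, fun hc => hω ?_⟩
  rw [hBad, Finset.mem_filter]
  exact ⟨Finset.mem_univ _, hc⟩

lemma filter_ne_card_le {N : ℕ} (S : Finset (Fin N)) (v : Fin N) (hv : v ∈ S)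
    (p : Fin N → Prop) (inst : DecidablePred p) (hp : ∀ u, p u → u ≠ v) :
    ((S.filter p).card : ℝ) ≤ (S.card : ℝ) - 1 := by
  have hsub : S.filter p ⊆ S.erase v := by
    intro u hu
    rw [Finset.mem_filter] at hu
    exact Finset.mem_erase.2 ⟨hp u hu.2, hu.1⟩
  have hle := Finset.card_le_card hsub
  rw [Finset.card_erase_of_mem hv] at hle
  have h1 : 1 ≤ S.card := Finset.card_pos.2 ⟨v, hv⟩
  calc ((S.filter p).card : ℝ) ≤ ((S.card - 1 : ℕ) : ℝ) := by exact_mod_cast hle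
    _ = (S.card:ℝ) - 1 := by rw [Nat.cast_sub h1]; norm_num


theorem variable_quasi_ramsey_lower (ε : ℝ) (hε : 0 ≤ ε) (f : ℕ → ℝ)
    (hf : ∀ ℓ : ℕ, (1 / 2 + ε) * ((ℓ : ℝ) - 1) ≤ f ℓ)
    (δ : ℝ) (hδ : 0 < δ) :
    ∀ᶠ k : ℕ in Filter.atTop,
      ENNReal.ofReal ((1 - δ) * ((k : ℝ) / Real.exp 1)) *
          (if ε ≤ 1 / 2 then
            ENNReal.ofReal (Real.exp (((k : ℝ) - 1) / 2 * LambdaStar (1 / 2 - ε)))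
          else ⊤) ≤
        Rvar f k := by
  by_cases hδ1 : 1 ≤ δ
  · apply Filter.Eventually.of_forall
    intro k
    have h0 : (1 - δ) * ((k:ℝ) / Real.exp 1) ≤ 0 :=
      mul_nonpos_iff.2 (Or.inr ⟨by linarith, by positivity⟩)
    rw [ENNReal.ofReal_of_nonpos h0, zero_mul]
    exact zero_le
  push_neg at hδ1
  by_cases hε2 : ε ≤ 1/2
  · have h2 : ∀ᶠ k : ℕ in Filter.atTop, 2*(1-δ)^k < δ := by
      have ht := tendsto_pow_atTop_nhds_zero_of_lt_one
        (by linarith : (0:ℝ) ≤ 1-δ) (by linarith : (1:ℝ)-δ < 1)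
      have hev := ht.eventually (gt_mem_nhds (by linarith : (0:ℝ) < δ/2))
      exact hev.mono (fun k hk => by linarith)
    filter_upwards [h2, Filter.eventually_ge_atTop 1] with k hk2 hk1
    rw [if_pos hε2]
    have hnn : 0 ≤ (1 - δ) * ((k:ℝ) / Real.exp 1) :=
      mul_nonneg (by linarith) (by positivity)
    rw [← ENNReal.ofReal_mul hnn]
    apply le_sInf
    rintro n ⟨N, rfl, hP⟩
    rw [← ENNReal.ofReal_natCast N]
    apply ENNReal.ofReal_le_ofReal
    by_contra hlt
    push_neg at hlt
    obtain ⟨G, hG⟩ := exists_good ε δ hε hε2 hδ hδ1 f hf k hk1 hk2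
      (by rw [mul_assoc] at hlt; rw [mul_assoc]; exact hlt)
    exact hG (hP G)
  · push_neg at hε2
    have hev : ∀ᶠ k : ℕ in Filter.atTop, (2:ℕ) ≤ k := Filter.eventually_ge_atTop 2
    filter_upwards [hev] with k hk2
    have hempty : {n : ℝ≥0∞ | ∃ N : ℕ, n = N ∧ ∀ G : SimpleGraph (Fin N),
        ∃ S : Finset (Fin N), k ≤ S.card ∧ IsHomog G S (f S.card)} = ∅ := by
      ext n
      simp only [Set.mem_setOf_eq, Set.mem_empty_iff_false, iff_false]
      rintro ⟨N, rfl, hP⟩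
      obtain ⟨S, hS1, hS2⟩ := hP ⊥
      have hℓ2 : 2 ≤ S.card := le_trans hk2 hS1
      have hc : (2:ℝ) ≤ (S.card:ℝ) := by exact_mod_cast hℓ2
      obtain ⟨v, hv⟩ : S.Nonempty := Finset.card_pos.1 (by omega)
      rcases hS2 with h | h
      · have hvle := h v hv
        have hfle : f S.card ≤ (S.card:ℝ) - 1 :=
          le_trans hvle (filter_ne_card_le S v hv _ _ (fun u hadj => hadj.ne'))
        nlinarith [hf S.card, hε2, hc, hfle]
      · have hvle := h v hv
        have hfle : f S.card ≤ (S.card:ℝ) - 1 :=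
          le_trans hvle (filter_ne_card_le S v hv _ _ (fun u hadj => hadj.ne'))
        nlinarith [hf S.card, hε2, hc, hfle]
    unfold Rvar
    rw [hempty, sInf_empty]
    exact le_top
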